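/- (Operator-norm speed limit for the swap gate.) Let N ≥ 2, θ ∈ ℝ, V an N×N unitary complex matrix, and let H be a Hermitian N×N matrix with smallest eigenvalue E₀ and largest eigenvalue E_max. Suppose T > 0 satisfies (−i T) • H = (π/2) • (V * (Ô(θ) ⊕ 0_{N−2}) * V†) (so exp(−i T H) equals the swap gate O_V = V(Ô(θ) ⊕ I_{N−2})V†). Then E_max − E₀ = π/T, i.e. T = π / (E_max − E₀). -/

import Mathlib

open Matrix Complex

/-- The 2×2 matrix `Ô(θ) = !![0, i·e^{−iθ}; i·e^{iθ}, 0]`. -/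
noncomputable def Ohat (θ : ℝ) : Matrix (Fin 2) (Fin 2) ℂ :=
  !![0, Complex.I * Complex.exp (-(Complex.I * (θ : ℂ)));
     Complex.I * Complex.exp (Complex.I * (θ : ℂ)), 0]

lemma Ohat_mul_self (θ : ℝ) : Ohat θ * Ohat θ = -1 := by
  ext i j
  fin_cases i <;> fin_cases j <;>
    simp [Ohat, Matrix.mul_apply, Fin.sum_univ_two, ← Complex.exp_add, Complex.I_mul_I,
      Matrix.one_apply]
  · rw [show Complex.I * Complex.exp (-(Complex.I * θ)) * (Complex.I * Complex.exp (Complex.I * θ))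
        = (Complex.I * Complex.I) * (Complex.exp (-(Complex.I * θ)) * Complex.exp (Complex.I * θ))
        by ring,
      ← Complex.exp_add, Complex.I_mul_I, neg_add_cancel, Complex.exp_zero]
    ring
  · rw [show Complex.I * Complex.exp (Complex.I * θ) * (Complex.I * Complex.exp (-(Complex.I * θ)))
        = (Complex.I * Complex.I) * (Complex.exp (Complex.I * θ) * Complex.exp (-(Complex.I * θ)))
        by ring,
      ← Complex.exp_add, Complex.I_mul_I, add_neg_cancel, Complex.exp_zero]
    ring

lemma trace_Ohat (θ : ℝ) : (Ohat θ).trace = 0 := by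
  simp [Ohat, Matrix.trace_fin_two]

lemma trace_submatrix_equiv' {m n R : Type*} [Fintype m] [Fintype n] [AddCommMonoid R]
    (A : Matrix n n R) (e : m ≃ n) : (A.submatrix e e).trace = A.trace := by
  rw [Matrix.trace, Matrix.trace]
  exact Fintype.sum_equiv e _ _ fun i => rfl

lemma trace_fromBlocks' {m n R : Type*} [Fintype m] [Fintype n] [AddCommMonoid R]
    (A : Matrix m m R) (B : Matrix m n R) (C : Matrix n m R) (D : Matrix n n R) :
    (Matrix.fromBlocks A B C D).trace = A.trace + D.trace := by
  simp only [Matrix.trace, Matrix.diag]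
  rw [Fintype.sum_sum_type]
  rfl

/-- Operator-norm speed limit for the swap gate: if a time-independent Hermitian
Hamiltonian `H`, with smallest eigenvalue `E₀` and largest eigenvalue `E_max`,
implements the swap gate `O_V = V (Ô(θ) ⊕ I) V†` at time `T > 0` (i.e. `(−iT)•H` is
the given logarithm of `O_V`), then `E_max − E₀ = π/T`, i.e. `T = π/(E_max − E₀)`. -/
theorem opNorm_speed_limit_swap_gate
    {N : ℕ} (hN : 2 ≤ N) (θ : ℝ) (V : Matrix (Fin N) (Fin N) ℂ) (hV : V * Vᴴ = 1)
    (H : Matrix (Fin N) (Fin N) ℂ) (hH : H.IsHermitian)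
    (T : ℝ) (hT : 0 < T)
    (hlog : ((-Complex.I) * (T : ℂ)) • H = (Real.pi / 2 : ℝ) •
        (V * (Matrix.reindex (finSumFinEquiv.trans (finCongr (Nat.add_sub_cancel' hN)))
                (finSumFinEquiv.trans (finCongr (Nat.add_sub_cancel' hN)))
                (Matrix.fromBlocks (Ohat θ) 0 0 (0 : Matrix (Fin (N - 2)) (Fin (N - 2)) ℂ))) * Vᴴ)) :
    (⨆ i, hH.eigenvalues i) - (⨅ i, hH.eigenvalues i) = Real.pi / T := by
  classical
  set e : (Fin 2 ⊕ Fin (N - 2)) ≃ Fin N := finSumFinEquiv.trans (finCongr (Nat.add_sub_cancel' hN))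
    with he
  set M0 : Matrix (Fin 2 ⊕ Fin (N - 2)) (Fin 2 ⊕ Fin (N - 2)) ℂ :=
    Matrix.fromBlocks (Ohat θ) 0 0 0 with hM0
  set M : Matrix (Fin N) (Fin N) ℂ := Matrix.reindex e e M0 with hM
  set B : Matrix (Fin N) (Fin N) ℂ := V * M * Vᴴ with hB
  have hVc : Vᴴ * V = 1 := mul_eq_one_comm.mp hV
  set c : ℝ := Real.pi / (2 * T) with hc
  have hc0 : 0 < c := div_pos Real.pi_pos (by linarith)
  have hT0 : (T : ℂ) ≠ 0 := by exact_mod_cast hT.ne'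
  -- H = (I * c) • B
  have h2 : H = (Complex.I * (c : ℂ)) • B := by
    have := congrArg (fun X => ((Complex.I / (T : ℂ))) • X) hlog
    simp only [smul_smul] at this
    rw [show Complex.I / (T : ℂ) * ((-Complex.I) * (T : ℂ)) = 1 by
        field_simp; linear_combination (-1 : ℂ) * Complex.I_sq,
      one_smul] at this
    rw [this, ← algebraMap_smul ℂ (Real.pi / 2 : ℝ) (V * M * Vᴴ), smul_smul]
    congr 1
    simp only [Complex.coe_algebraMap, hc]
    push_cast
    rw [div_mul_eq_mul_div, mul_div_assoc, div_div]
  -- M * M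
  have hMM : M * M = Matrix.reindex e e (Matrix.fromBlocks (-1) 0 0 0) := by
    rw [hM, Matrix.reindex_apply, Matrix.submatrix_mul_equiv]
    rw [hM0, Matrix.fromBlocks_multiply]
    simp [Ohat_mul_self]
  -- M * M * M = -M
  have hMMM : M * M * M = -M := by
    rw [hMM, hM]
    simp only [Matrix.reindex_apply]
    rw [Matrix.submatrix_mul_equiv, hM0, Matrix.fromBlocks_multiply]
    rw [show -((Matrix.fromBlocks (Ohat θ) 0 0 0 : Matrix (Fin 2 ⊕ Fin (N - 2))
          (Fin 2 ⊕ Fin (N - 2)) ℂ).submatrix ⇑e.symm ⇑e.symm)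
        = ((-(Matrix.fromBlocks (Ohat θ) 0 0 0) : Matrix (Fin 2 ⊕ Fin (N - 2))
          (Fin 2 ⊕ Fin (N - 2)) ℂ).submatrix ⇑e.symm ⇑e.symm) from rfl]
    rw [Matrix.fromBlocks_neg]
    simp [Matrix.neg_mul, Matrix.mul_zero, Matrix.zero_mul, Matrix.one_mul]
  -- B * B and B * B * B
  have hBB : B * B = V * (M * M) * Vᴴ := by
    rw [hB]
    calc V * M * Vᴴ * (V * M * Vᴴ) = V * M * (Vᴴ * V) * M * Vᴴ := by
          simp only [Matrix.mul_assoc]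
      _ = V * (M * M) * Vᴴ := by rw [hVc]; simp only [Matrix.mul_one, Matrix.mul_assoc]
  have hBBB : B * B * B = -B := by
    rw [hBB, hB]
    calc V * (M * M) * Vᴴ * (V * M * Vᴴ) = V * (M * M) * (Vᴴ * V) * M * Vᴴ := by
          simp only [Matrix.mul_assoc]
      _ = V * (M * M * M) * Vᴴ := by rw [hVc]; simp only [Matrix.mul_one, Matrix.mul_assoc]
      _ = -(V * M * Vᴴ) := by rw [hMMM]; simp [Matrix.neg_mul, Matrix.mul_neg]
  -- trace facts
  have htrM : M.trace = 0 := by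
    rw [hM, Matrix.reindex_apply, trace_submatrix_equiv', hM0, trace_fromBlocks', trace_Ohat]
    simp
  have htrMM : (M * M).trace = -2 := by
    rw [hMM, Matrix.reindex_apply, trace_submatrix_equiv', trace_fromBlocks']
    simp [Matrix.trace_fin_two]
  have htrB : B.trace = 0 := by
    rw [hB, Matrix.trace_mul_cycle, hVc, Matrix.one_mul, htrM]
  have htrBB : (B * B).trace = -2 := by
    rw [hBB, Matrix.trace_mul_cycle, hVc, Matrix.one_mul, htrMM]
  -- trace H = 0, trace (H*H) = 2 c^2
  have htrH : H.trace = 0 := by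
    rw [h2, Matrix.trace_smul, htrB, smul_zero]
  have htrHH : (H * H).trace = 2 * (c : ℂ) ^ 2 := by
    rw [h2, Matrix.smul_mul, Matrix.mul_smul, smul_smul, Matrix.trace_smul, htrBB]
    have : Complex.I * (c : ℂ) * (Complex.I * (c : ℂ)) = -(c : ℂ) ^ 2 := by
      rw [show Complex.I * (c:ℂ) * (Complex.I * (c:ℂ)) = (Complex.I * Complex.I) * ((c:ℂ)*(c:ℂ))
        by ring, Complex.I_mul_I]; ring
    rw [this, smul_eq_mul]
    ring
  -- H^3 = c^2 • H
  have hH3 : H * H * H = ((c : ℂ) ^ 2) • H := by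
    rw [h2]
    simp only [smul_mul_assoc, mul_smul_comm, smul_smul, hBBB, smul_neg, ← neg_smul]
    congr 1
    linear_combination (-(c : ℂ) ^ 3 * Complex.I) * Complex.I_sq
  set μ : Fin N → ℝ := hH.eigenvalues with hμ
  -- each eigenvalue satisfies μ^3 = c^2 μ
  have hcube : ∀ i, μ i ^ 3 = c ^ 2 * μ i := by
    intro i
    have hv := hH.mulVec_eigenvectorBasis i
    have hv3 : (H * H * H) *ᵥ ⇑(hH.eigenvectorBasis i) =
        (μ i ^ 3) • ⇑(hH.eigenvectorBasis i) := by
      rw [← Matrix.mulVec_mulVec, ← Matrix.mulVec_mulVec]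
      simp only [hv, Matrix.mulVec_smul, smul_smul]
      congr 1
      ring
    rw [hH3, Matrix.smul_mulVec, hv] at hv3
    have hvne : ⇑(hH.eigenvectorBasis i) ≠ 0 := by
      intro h0
      exact hH.eigenvectorBasis.orthonormal.ne_zero i (by ext j; exact congrFun h0 j)
    obtain ⟨j, hj⟩ := Function.ne_iff.mp hvne
    have hj' : hH.eigenvectorBasis i j ≠ 0 := hj
    have := congrFun hv3 j
    simp only [Pi.smul_apply, Complex.real_smul, smul_eq_mul] at this
    push_cast at this
    rw [← mul_assoc] at this
    have h4 := mul_right_cancel₀ hj' this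
    show hH.eigenvalues i ^ 3 = c ^ 2 * hH.eigenvalues i
    simp only [hμ] at h4
    exact_mod_cast h4.symm
  -- sums of eigenvalues and their squares via the spectral theorem
  set U : Matrix (Fin N) (Fin N) ℂ := (hH.eigenvectorUnitary : Matrix (Fin N) (Fin N) ℂ) with hU
  have hUU : U * star U = 1 := (Matrix.mem_unitaryGroup_iff).mp hH.eigenvectorUnitary.2
  have hUU' : star U * U = 1 := mul_eq_one_comm.mp hUU
  have hspec : H = U * Matrix.diagonal (RCLike.ofReal ∘ μ) * star U := hH.spectral_theorem
  set D : Matrix (Fin N) (Fin N) ℂ := Matrix.diagonal (RCLike.ofReal ∘ μ) with hD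
  have hsum : ∑ i, μ i = 0 := by
    have h := htrH
    rw [hspec, Matrix.trace_mul_cycle, hUU', Matrix.one_mul, Matrix.trace_diagonal] at h
    have h' : ((∑ i, μ i : ℝ) : ℂ) = 0 := by push_cast; simpa using h
    exact_mod_cast h'
  have hsumsq : ∑ i, μ i ^ 2 = 2 * c ^ 2 := by
    have h := htrHH
    rw [hspec] at h
    have hrw : U * D * star U * (U * D * star U) = U * (D * D) * star U := by
      calc U * D * star U * (U * D * star U) = U * D * (star U * U) * D * star U := by
            simp only [Matrix.mul_assoc]
        _ = U * (D * D) * star U := by rw [hUU']; simp only [Matrix.mul_one, Matrix.mul_assoc]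
    rw [hrw, Matrix.trace_mul_cycle, hUU', Matrix.one_mul] at h
    rw [hD, Matrix.diagonal_mul_diagonal, Matrix.trace_diagonal] at h
    have h' : ((∑ i, μ i ^ 2 : ℝ) : ℂ) = ((2 * c ^ 2 : ℝ) : ℂ) := by
      push_cast; simpa [pow_two] using h
    exact_mod_cast h'
  -- trichotomy for eigenvalues
  have htri : ∀ i, μ i = 0 ∨ μ i = c ∨ μ i = -c := by
    intro i
    have h1 : μ i * ((μ i - c) * (μ i + c)) = 0 := by
      have := hcube i
      nlinarith [hcube i]
    rcases mul_eq_zero.mp h1 with h | h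
    · exact Or.inl h
    · rcases mul_eq_zero.mp h with h | h
      · exact Or.inr (Or.inl (by linarith))
      · exact Or.inr (Or.inr (by linarith))
  have hub : ∀ i, μ i ≤ c := by
    intro i; rcases htri i with h | h | h <;> linarith
  have hlb : ∀ i, -c ≤ μ i := by
    intro i; rcases htri i with h | h | h <;> linarith
  have hc2 : (0 : ℝ) < 2 * c ^ 2 := by positivity
  have hex1 : ∃ i, μ i = c := by
    by_contra hno
    push_neg at hno
    have hnp : ∀ i ∈ Finset.univ, μ i ≤ 0 := by
      intro i _
      rcases htri i with h | h | h
      · exact le_of_eq h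
      · exact absurd h (hno i)
      · linarith
    have hall0 := (Finset.sum_eq_zero_iff_of_nonpos hnp).mp hsum
    have : ∑ i, μ i ^ 2 = 0 :=
      Finset.sum_eq_zero fun i hi => by rw [hall0 i hi]; ring
    rw [this] at hsumsq; linarith
  have hex2 : ∃ i, μ i = -c := by
    by_contra hno
    push_neg at hno
    have hnp : ∀ i ∈ Finset.univ, 0 ≤ μ i := by
      intro i _
      rcases htri i with h | h | h
      · exact ge_of_eq h
      · linarith
      · exact absurd h (hno i)
    have hall0 := (Finset.sum_eq_zero_iff_of_nonneg hnp).mp hsum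
    have : ∑ i, μ i ^ 2 = 0 :=
      Finset.sum_eq_zero fun i hi => by rw [hall0 i hi]; ring
    rw [this] at hsumsq; linarith
  have hne : Nonempty (Fin N) := ⟨⟨0, by omega⟩⟩
  have hsup : (⨆ i, μ i) = c := by
    apply le_antisymm (ciSup_le hub)
    obtain ⟨i, hi⟩ := hex1
    rw [← hi]
    exact le_ciSup (Set.Finite.bddAbove (Set.finite_range μ)) i
  have hinf : (⨅ i, μ i) = -c := by
    apply le_antisymm
    · obtain ⟨i, hi⟩ := hex2
      rw [← hi]
      exact ciInf_le (Set.Finite.bddBelow (Set.finite_range μ)) i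
    · exact le_ciInf hlb
  rw [hsup, hinf, hc]
  field_simp
  ring
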